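/- Assume in addition the Semmes-type Poincaré inequality on Euclidean balls: there is C₀ > 0 such that for every Euclidean ball B = B(x,r) and every continuously differentiable u : ℝⁿ → ℝ, ∫_B (1/μ(B)) ∫_B |u(z) − u(y)| dμ(y) dμ(z) ≤ C₀ μ(B)^{1/n} ∫_{2B} ω(z)^{−1/n} ‖∇u(z)‖ dμ(z). Then there exist constants C' > 0 and C₂ ≥ 1, independent of x, r and u, such that for every x ∈ ℝⁿ, every r > 0, and every continuously differentiable u : ℝⁿ → ℝ, inf_{c ∈ ℝ} ∫_{B^d(x,r)} |u − c| dμ ≤ C' r ∫_{B^d(x, C₂ r)} ω(z)^{−1/n} ‖∇u(z)‖ dμ(z). In other words, the metric measure space (ℝⁿ, d, μ) supports a (1,1)-Poincaré inequality with the metric-ball Poincaré constant independent of the ball. -/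

import Mathlib

open MeasureTheory Metric Filter
open scoped Topology ENNReal


variable {n : ℕ}




/-- metric balls of `d` are open in the Euclidean topology -/
lemma aux_isOpen_dball (d : EuclideanSpace ℝ (Fin n) → EuclideanSpace ℝ (Fin n) → ℝ)
    (hd_tri : ∀ x y z, d x z ≤ d x y + d y z)
    (hd_top : ∀ (x : EuclideanSpace ℝ (Fin n)), ∀ ε : ℝ, 0 < ε →
      (∃ δ > 0, ∀ y, dist x y < δ → d x y < ε) ∧
      (∃ δ > 0, ∀ y, d x y < δ → dist x y < ε))
    (x : EuclideanSpace ℝ (Fin n)) (r : ℝ) : IsOpen {y | d x y < r} := by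
  rw [Metric.isOpen_iff]
  intro y hy
  obtain ⟨δ, hδ, h⟩ := (hd_top y (r - d x y) (by simpa using hy)).1
  refine ⟨δ, hδ, fun z hz => ?_⟩
  have h1 : d y z < r - d x y := h z (by rw [dist_comm]; exact mem_ball.mp hz)
  have := hd_tri x y z
  simp only [Set.mem_setOf_eq]
  linarith

/-- continuous functions are integrable on bounded sets w.r.t. μ -/
lemma aux_integrableOn {μ : Measure (EuclideanSpace ℝ (Fin n))}
    (hfin : ∀ (x : EuclideanSpace ℝ (Fin n)) (r : ℝ), 0 < r → μ (ball x r) < ⊤)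
    {f : EuclideanSpace ℝ (Fin n) → ℝ} (hf : Continuous f)
    {s : Set (EuclideanSpace ℝ (Fin n))} (hs : Bornology.IsBounded s) : IntegrableOn f s μ := by
  obtain ⟨R, hR⟩ := hs.subset_closedBall 0
  have hR' : s ⊆ closedBall 0 (max R 0) :=
    hR.trans (closedBall_subset_closedBall (le_max_left _ _))
  refine IntegrableOn.mono_set ?_ hR'
  have hKc : IsCompact (closedBall (0 : EuclideanSpace ℝ (Fin n)) (max R 0)) :=
    isCompact_closedBall _ _
  obtain ⟨M, hM⟩ := hKc.exists_bound_of_continuousOn hf.continuousOn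
  have hμK : μ (closedBall (0 : EuclideanSpace ℝ (Fin n)) (max R 0)) < ⊤ :=
    lt_of_le_of_lt (measure_mono (closedBall_subset_ball (lt_add_one _)))
      (hfin 0 (max R 0 + 1) (by positivity))
  refine Integrable.mono' (g := fun _ => M) ((integrableOn_const_iff).2 (Or.inr hμK))
    hf.aestronglyMeasurable.restrict ?_
  exact ae_restrict_of_forall_mem measurableSet_closedBall hM

/-- small balls have small measure -/
lemma aux_exists_small (hn : 0 < n) (ω : EuclideanSpace ℝ (Fin n) → ℝ)
    {μ : Measure (EuclideanSpace ℝ (Fin n))}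
    (hμ : μ = volume.withDensity fun x => ENNReal.ofReal (ω x))
    (hfin : ∀ (x : EuclideanSpace ℝ (Fin n)) (r : ℝ), 0 < r → μ (ball x r) < ⊤)
    (x : EuclideanSpace ℝ (Fin n)) {ε : ℝ} (hε : 0 < ε) :
    ∃ t : ℝ, 0 < t ∧ (μ (ball x t)).toReal < ε := by
  haveI : NeZero n := ⟨hn.ne'⟩
  have hx0 : μ {x} = 0 := by
    rw [hμ, withDensity_apply _ (measurableSet_singleton x)]
    rw [setLIntegral_measure_zero _ _ (measure_singleton x)]
  have hanti : Antitone (fun k : ℕ => ball x (1 / (k + 1 : ℝ))) := by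
    intro a b hab
    apply ball_subset_ball
    apply one_div_le_one_div_of_le (by positivity)
    exact_mod_cast by exact_mod_cast add_le_add_left (Nat.cast_le.2 hab) 1
  have hiInter : (⋂ k : ℕ, ball x (1 / (k + 1 : ℝ))) = {x} := by
    ext z
    simp only [Set.mem_iInter, mem_ball, Set.mem_singleton_iff]
    constructor
    · intro h
      by_contra hzx
      have hd : 0 < dist z x := dist_pos.2 hzx
      obtain ⟨k, hk⟩ := exists_nat_one_div_lt hd
      exact absurd (h k) (not_lt.2 hk.le)
    · rintro rfl
      intro k; simp only [dist_self]; positivity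
  have htend : Tendsto (fun k : ℕ => μ (ball x (1 / (k + 1 : ℝ)))) atTop (𝓝 (μ {x})) := by
    have := tendsto_measure_iInter_atTop
      (μ := μ) (s := fun k : ℕ => ball x (1 / (k + 1 : ℝ)))
      (fun k => measurableSet_ball.nullMeasurableSet) hanti
      ⟨0, (hfin x _ (by norm_num)).ne⟩
    rwa [hiInter] at this
  rw [hx0] at htend
  have := htend.eventually_lt_const (by exact ENNReal.ofReal_pos.2 hε :
    (0 : ℝ≥0∞) < ENNReal.ofReal ε)
  obtain ⟨k, hk⟩ := this.exists
  refine ⟨1 / (k + 1 : ℝ), by positivity, ?_⟩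
  exact ENNReal.toReal_lt_of_lt_ofReal hk




/-- doubling in real form -/
lemma aux_doub_real {μ : Measure (EuclideanSpace ℝ (Fin n))} {Cd : ℝ} (hCd : 1 ≤ Cd)
    (hdoub : ∀ (x : EuclideanSpace ℝ (Fin n)) (r : ℝ), 0 < r →
      μ (ball x (2 * r)) ≤ ENNReal.ofReal Cd * μ (ball x r))
    (hfin : ∀ (x : EuclideanSpace ℝ (Fin n)) (r : ℝ), 0 < r → μ (ball x r) < ⊤)
    (x : EuclideanSpace ℝ (Fin n)) {s : ℝ} (hs : 0 < s) :
    (μ (ball x (2 * s))).toReal ≤ Cd * (μ (ball x s)).toReal := by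
  have h := hdoub x s hs
  have hne : ENNReal.ofReal Cd * μ (ball x s) ≠ ⊤ :=
    ENNReal.mul_ne_top ENNReal.ofReal_ne_top (hfin x s hs).ne
  calc (μ (ball x (2 * s))).toReal ≤ (ENNReal.ofReal Cd * μ (ball x s)).toReal :=
        ENNReal.toReal_mono hne h
    _ = Cd * (μ (ball x s)).toReal := by
        rw [ENNReal.toReal_mul, ENNReal.toReal_ofReal (by linarith)]

/-- reverse doubling step: the measure of balls grows by a definite factor upon doubling -/
lemma aux_revdoub (hn : 0 < n) {μ : Measure (EuclideanSpace ℝ (Fin n))} {Cd : ℝ} (hCd : 1 ≤ Cd)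
    (hdoub : ∀ (x : EuclideanSpace ℝ (Fin n)) (r : ℝ), 0 < r →
      μ (ball x (2 * r)) ≤ ENNReal.ofReal Cd * μ (ball x r))
    (hfin : ∀ (x : EuclideanSpace ℝ (Fin n)) (r : ℝ), 0 < r → μ (ball x r) < ⊤)
    (x : EuclideanSpace ℝ (Fin n)) {s : ℝ} (hs : 0 < s) :
    (1 + (Cd⁻¹) ^ 3) * (μ (ball x s)).toReal ≤ (μ (ball x (2 * s))).toReal := by
  have hCd0 : (0:ℝ) < Cd := by linarith
  set e : EuclideanSpace ℝ (Fin n) := EuclideanSpace.single (⟨0, hn⟩ : Fin n) (1:ℝ) with he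
  have hnorme : ‖e‖ = 1 := by rw [he, EuclideanSpace.norm_single]; norm_num
  set y : EuclideanSpace ℝ (Fin n) := x + (3 * s / 2) • e with hy
  have hdist : dist x y = 3 * s / 2 := by
    rw [hy, dist_eq_norm]
    have hxx : x - (x + (3 * s / 2) • e) = -((3 * s / 2) • e) := by abel
    rw [hxx, norm_neg, norm_smul, hnorme]
    simp only [Real.norm_eq_abs, mul_one]
    rw [abs_of_pos (by linarith)]
  -- disjointness
  have hdisj : Disjoint (ball x s) (ball y (s / 2)) := by
    rw [Set.disjoint_left]
    intro z hz1 hz2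
    rw [mem_ball] at hz1 hz2
    have := dist_triangle x z y
    rw [dist_comm x z, hdist] at this
    linarith
  -- union inside the double ball
  have hsub1 : ball x s ∪ ball y (s / 2) ⊆ ball x (2 * s) := by
    rintro z (hz | hz) <;> rw [mem_ball] at *
    · linarith
    · have := dist_triangle z y x
      rw [dist_comm y x, hdist] at this
      linarith
  -- ball x s inside a tripled ball around y
  have hsub2 : ball x s ⊆ ball y (2 * (2 * (2 * (s / 2)))) := by
    intro z hz
    rw [mem_ball] at *
    have := dist_triangle z x y
    rw [hdist] at this
    have h4 : 2 * (2 * (2 * (s / 2))) = 4 * s := by ring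
    rw [h4]
    linarith
  -- doubling three times at y
  have hd3 : μ (ball y (2 * (2 * (2 * (s / 2))))) ≤
      (ENNReal.ofReal Cd) ^ 3 * μ (ball y (s / 2)) := by
    calc μ (ball y (2 * (2 * (2 * (s / 2)))))
        ≤ ENNReal.ofReal Cd * μ (ball y (2 * (2 * (s / 2)))) :=
          hdoub y _ (by linarith)
      _ ≤ ENNReal.ofReal Cd * (ENNReal.ofReal Cd * μ (ball y (2 * (s / 2)))) := by
          gcongr; exact hdoub y _ (by linarith)
      _ ≤ ENNReal.ofReal Cd * (ENNReal.ofReal Cd * (ENNReal.ofReal Cd * μ (ball y (s / 2)))) := by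
          gcongr; exact hdoub y _ (by linarith)
      _ = (ENNReal.ofReal Cd) ^ 3 * μ (ball y (s / 2)) := by ring
  have hxy3 : μ (ball x s) ≤ (ENNReal.ofReal Cd) ^ 3 * μ (ball y (s / 2)) :=
    le_trans (measure_mono hsub2) hd3
  -- real form: (μ (ball y (s/2))).toReal ≥ Cd⁻³ * (μ (ball x s)).toReal
  have hfy : μ (ball y (s / 2)) ≠ ⊤ := (hfin y (s/2) (by linarith)).ne
  have hxy3' : (μ (ball x s)).toReal ≤ Cd ^ 3 * (μ (ball y (s / 2))).toReal := by
    have hne : (ENNReal.ofReal Cd) ^ 3 * μ (ball y (s / 2)) ≠ ⊤ :=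
      ENNReal.mul_ne_top (by simp [ENNReal.ofReal_ne_top]) hfy
    calc (μ (ball x s)).toReal ≤ ((ENNReal.ofReal Cd) ^ 3 * μ (ball y (s / 2))).toReal :=
          ENNReal.toReal_mono hne hxy3
      _ = Cd ^ 3 * (μ (ball y (s / 2))).toReal := by
          rw [ENNReal.toReal_mul, ENNReal.toReal_pow, ENNReal.toReal_ofReal (by linarith)]
  have hinv : (Cd⁻¹) ^ 3 * (μ (ball x s)).toReal ≤ (μ (ball y (s / 2))).toReal := by
    rw [inv_pow]
    rw [inv_mul_le_iff₀ (by positivity)]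
    linarith
  -- additivity
  have hunion : μ (ball x s) + μ (ball y (s / 2)) ≤ μ (ball x (2 * s)) := by
    rw [← measure_union hdisj measurableSet_ball]
    exact measure_mono hsub1
  have hreal : (μ (ball x s)).toReal + (μ (ball y (s / 2))).toReal
      ≤ (μ (ball x (2 * s))).toReal := by
    rw [← ENNReal.toReal_add (hfin x s hs).ne hfy]
    exact ENNReal.toReal_mono (hfin x (2*s) (by linarith)).ne hunion
  nlinarith [ENNReal.toReal_nonneg (a := μ (ball x s))]

/-- balls eventually have measure as large as we like -/
lemma aux_exists_large (hn : 0 < n) {μ : Measure (EuclideanSpace ℝ (Fin n))} {Cd : ℝ}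
    (hCd : 1 ≤ Cd)
    (hdoub : ∀ (x : EuclideanSpace ℝ (Fin n)) (r : ℝ), 0 < r →
      μ (ball x (2 * r)) ≤ ENNReal.ofReal Cd * μ (ball x r))
    (hpos : ∀ (x : EuclideanSpace ℝ (Fin n)) (r : ℝ), 0 < r → 0 < μ (ball x r))
    (hfin : ∀ (x : EuclideanSpace ℝ (Fin n)) (r : ℝ), 0 < r → μ (ball x r) < ⊤)
    (x : EuclideanSpace ℝ (Fin n)) (R : ℝ) :
    ∃ t : ℝ, 0 < t ∧ R ≤ (μ (ball x t)).toReal := by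
  have hCd0 : (0:ℝ) < Cd := by linarith
  set q : ℝ := 1 + (Cd⁻¹) ^ 3 with hq
  have hq1 : 1 < q := by
    have h3 : (0:ℝ) < (Cd⁻¹)^3 := by positivity
    simp only [hq]
    linarith
  set v : ℕ → ℝ := fun k => (μ (ball x ((2:ℝ) ^ k))).toReal with hv
  have hv0 : 0 < v 0 := by
    rw [hv]
    simp only [pow_zero]
    exact ENNReal.toReal_pos (hpos x 1 one_pos).ne' (hfin x 1 one_pos).ne
  have hstep : ∀ k, q ^ k * v 0 ≤ v k := by
    intro k
    induction k with
    | zero => simp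
    | succ k ih =>
      have h2 : (2:ℝ) ^ (k+1) = 2 * 2 ^ k := by ring
      have := aux_revdoub hn hCd hdoub hfin x (s := (2:ℝ)^k) (by positivity)
      calc q ^ (k+1) * v 0 = q * (q ^ k * v 0) := by ring
        _ ≤ q * v k := by
            apply mul_le_mul_of_nonneg_left ih (by linarith)
        _ ≤ v (k+1) := by rw [hv]; simp only []; rw [h2]; exact this
  obtain ⟨k, hk⟩ := pow_unbounded_of_one_lt (R / v 0) hq1
  refine ⟨(2:ℝ) ^ k, by positivity, ?_⟩
  have : R < q ^ k * v 0 := by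
    rw [← div_lt_iff₀ hv0] at *
    exact lt_of_lt_of_le hk (by nlinarith [hv0, pow_nonneg (by linarith : (0:ℝ) ≤ q) k])
  exact le_trans this.le (hstep k)




/-- the weighted gradient integrand is integrable on bounded sets w.r.t. μ -/
lemma aux_integrableOn_h (hn : 2 ≤ n) (ω : EuclideanSpace ℝ (Fin n) → ℝ)
    (hω : ∀ x, 0 < ω x) (hωloc : LocallyIntegrable ω volume)
    {μ : Measure (EuclideanSpace ℝ (Fin n))}
    (hμ : μ = volume.withDensity fun x => ENNReal.ofReal (ω x))
    (u : EuclideanSpace ℝ (Fin n) → ℝ) (hu : ContDiff ℝ 1 u)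
    {s : Set (EuclideanSpace ℝ (Fin n))} (hs : Bornology.IsBounded s) (hsm : MeasurableSet s) :
    IntegrableOn (fun z => ω z ^ (-(1:ℝ)/n) * ‖fderiv ℝ u z‖) s μ := by
  -- bounded superset : a closed ball
  obtain ⟨R, hR⟩ := hs.subset_closedBall 0
  have hR' : s ⊆ closedBall 0 (max R 0) :=
    hR.trans (closedBall_subset_closedBall (le_max_left _ _))
  have hKc : IsCompact (closedBall (0 : EuclideanSpace ℝ (Fin n)) (max R 0)) :=
    isCompact_closedBall _ _
  -- bound for the gradient norm
  have hgradcont : Continuous fun z => ‖fderiv ℝ u z‖ :=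
    (hu.continuous_fderiv one_ne_zero).norm
  obtain ⟨M, hM⟩ := hKc.exists_bound_of_continuousOn hgradcont.continuousOn
  set M' : ℝ := max M 0 with hM'
  have hM'0 : 0 ≤ M' := le_max_right _ _
  have hMs : ∀ z ∈ s, ‖fderiv ℝ u z‖ ≤ M' := fun z hz =>
    le_trans (by simpa using hM z (hR' hz)) (le_max_left _ _)
  -- move to a withDensity statement
  rw [IntegrableOn, hμ, restrict_withDensity hsm]
  set ν := volume.restrict s with hν
  have hωae : AEMeasurable ω ν := hωloc.aestronglyMeasurable.aemeasurable.restrict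
  have hg : Measurable (hωae.mk ω) := hωae.measurable_mk
  have hcong : (fun x => ENNReal.ofReal (ω x)) =ᵐ[ν] fun x => ENNReal.ofReal (hωae.mk ω x) := by
    filter_upwards [hωae.ae_eq_mk] with z hz
    rw [hz]
  rw [withDensity_congr_ae hcong,
    integrable_withDensity_iff (hg.ennreal_ofReal) (by
      filter_upwards with z; exact ENNReal.ofReal_lt_top)]
  -- reduce to integrability of (fun z => h z * ω z)
  have hintg : Integrable (fun z => (ω z ^ (-(1:ℝ)/n) * ‖fderiv ℝ u z‖) * ω z) ν := by
    -- a.e. measurability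
    have ham : AEStronglyMeasurable
        (fun z => (ω z ^ (-(1:ℝ)/n) * ‖fderiv ℝ u z‖) * ω z) ν := by
      have h1 : Measurable fun t : ℝ => t ^ (-(1:ℝ)/n) := by measurability
      exact (((h1.comp_aemeasurable hωae).mul
        hgradcont.aemeasurable.restrict).mul hωae).aestronglyMeasurable
    -- integrable dominating function
    have hωint : IntegrableOn ω (closedBall 0 (max R 0)) volume :=
      hωloc.integrableOn_isCompact hKc
    have hωint' : Integrable ω ν := by
      rw [hν]
      exact (hωint.mono_set hR')
    have hvols : volume s < ⊤ :=
      lt_of_le_of_lt (measure_mono hR') (measure_closedBall_lt_top)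
    have hconst : Integrable (fun _ => (1:ℝ)) ν := by
      rw [hν]
      exact (integrableOn_const_iff).2 (Or.inr hvols)
    have hdom : Integrable (fun z => M' * (1 + ω z)) ν := by
      refine Integrable.const_mul ?_ _
      exact hconst.add hωint'
    refine hdom.mono' ham ?_
    rw [hν]
    refine ae_restrict_of_forall_mem hsm ?_
    intro z hz
    have hω0 := hω z
    have hn0 : (0:ℝ) < (n:ℝ) := by exact_mod_cast (by omega : 0 < n)
    have hneg : -(1:ℝ)/(n:ℝ) = -((1:ℝ)/(n:ℝ)) := by ring
    have h1n : (1:ℝ)/(n:ℝ) ≤ 1 := by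
      rw [div_le_one hn0]
      exact_mod_cast (by omega : 1 ≤ n)
    have h1n0 : (0:ℝ) ≤ 1/(n:ℝ) := by positivity
    have hexp0 : (0:ℝ) ≤ -(1:ℝ)/n + 1 := by rw [hneg]; linarith
    have hexp1 : -(1:ℝ)/n + 1 ≤ 1 := by rw [hneg]; linarith
    -- rewrite the product
    have hprod : (ω z ^ (-(1:ℝ)/n) * ‖fderiv ℝ u z‖) * ω z
        = ω z ^ (-(1:ℝ)/n + 1) * ‖fderiv ℝ u z‖ := by
      rw [Real.rpow_add hω0, Real.rpow_one]
      ring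
    have hrpow_le : ω z ^ (-(1:ℝ)/n + 1) ≤ 1 + ω z := by
      rcases le_or_gt (ω z) 1 with h1 | h1
      · have := Real.rpow_le_one hω0.le h1 hexp0
        linarith
      · have := Real.rpow_le_rpow_of_exponent_le h1.le hexp1
        rw [Real.rpow_one] at this
        linarith
    have hnn : 0 ≤ (ω z ^ (-(1:ℝ)/n) * ‖fderiv ℝ u z‖) * ω z := by positivity
    rw [Real.norm_eq_abs, abs_of_nonneg hnn, hprod]
    calc ω z ^ (-(1:ℝ)/n + 1) * ‖fderiv ℝ u z‖ ≤ (1 + ω z) * M' := by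
          apply mul_le_mul hrpow_le (hMs z hz) (norm_nonneg _)
          linarith
      _ = M' * (1 + ω z) := by ring
  refine hintg.congr ?_
  filter_upwards [hωae.ae_eq_mk] with z hz
  rw [← hz, ENNReal.toReal_ofReal (hω z).le]



set_option maxHeartbeats 1000000 in
/-- (Proposition 6.7) If in addition the Semmes-type Poincaré inequality holds on
Euclidean balls, then `(ℝⁿ, d, μ)` supports a (1,1)-Poincaré inequality on metric
balls, with constants `C'`, `C₂` independent of the ball and the function. -/
theorem poincare_inequality_of_strongAinfty
    (n : ℕ) (hn : 2 ≤ n)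
    (ω : EuclideanSpace ℝ (Fin n) → ℝ) (hω : ∀ x, 0 < ω x)
    (hωloc : LocallyIntegrable ω volume)
    (μ : Measure (EuclideanSpace ℝ (Fin n)))
    (hμ : μ = volume.withDensity fun x => ENNReal.ofReal (ω x))
    (Cd : ℝ) (hCd : 1 ≤ Cd)
    (hdoub : ∀ (x : EuclideanSpace ℝ (Fin n)) (r : ℝ), 0 < r →
      μ (ball x (2 * r)) ≤ ENNReal.ofReal Cd * μ (ball x r))
    (hpos : ∀ (x : EuclideanSpace ℝ (Fin n)) (r : ℝ), 0 < r → 0 < μ (ball x r))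
    (hfin : ∀ (x : EuclideanSpace ℝ (Fin n)) (r : ℝ), 0 < r → μ (ball x r) < ⊤)
    (d : EuclideanSpace ℝ (Fin n) → EuclideanSpace ℝ (Fin n) → ℝ)
    (hd_self : ∀ x, d x x = 0)
    (hd_pos : ∀ x y, x ≠ y → 0 < d x y)
    (hd_symm : ∀ x y, d x y = d y x)
    (hd_tri : ∀ x y z, d x z ≤ d x y + d y z)
    (hd_top : ∀ (x : EuclideanSpace ℝ (Fin n)), ∀ ε : ℝ, 0 < ε →
      (∃ δ > 0, ∀ y, dist x y < δ → d x y < ε) ∧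
      (∃ δ > 0, ∀ y, d x y < δ → dist x y < ε))
    (C : ℝ) (hC : 1 ≤ C)
    (hcomp : ∀ x y : EuclideanSpace ℝ (Fin n),
      C⁻¹ * (μ (ball x (dist x y))).toReal ≤ d x y ^ n ∧
      d x y ^ n ≤ C * (μ (ball x (dist x y))).toReal)
    (C₀ : ℝ) (hC₀ : 0 < C₀)
    (hSemmes : ∀ (x : EuclideanSpace ℝ (Fin n)) (r : ℝ), 0 < r →
      ∀ u : EuclideanSpace ℝ (Fin n) → ℝ, ContDiff ℝ 1 u →
      (∫ z in ball x r, (μ (ball x r)).toReal⁻¹ *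
          (∫ y in ball x r, |u z - u y| ∂μ) ∂μ) ≤
        C₀ * (μ (ball x r)).toReal ^ ((1 : ℝ) / n) *
          ∫ z in ball x (2 * r), ω z ^ (-(1 : ℝ) / n) * ‖fderiv ℝ u z‖ ∂μ) :
    ∃ C' : ℝ, 0 < C' ∧ ∃ C₂ : ℝ, 1 ≤ C₂ ∧
      ∀ (x : EuclideanSpace ℝ (Fin n)) (r : ℝ), 0 < r →
      ∀ u : EuclideanSpace ℝ (Fin n) → ℝ, ContDiff ℝ 1 u →
      (⨅ c : ℝ, ∫ y in {y | d x y < r}, |u y - c| ∂μ) ≤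
        C' * r * ∫ z in {y | d x y < C₂ * r}, ω z ^ (-(1 : ℝ) / n) * ‖fderiv ℝ u z‖ ∂μ := by
  classical
  have hn0 : 0 < n := by omega
  have hnne : n ≠ 0 := by omega
  have hnR : (0:ℝ) < (n:ℝ) := by exact_mod_cast hn0
  have hC0 : (0:ℝ) < C := by linarith
  have hCd0 : (0:ℝ) < Cd := by linarith
  have hd_nonneg : ∀ a b, 0 ≤ d a b := by
    intro a b
    rcases eq_or_ne a b with rfl | hab
    · rw [hd_self]
    · exact (hd_pos a b hab).le
  have hCC : (0:ℝ) ≤ C ^ 2 * Cd ^ 3 := by positivity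
  refine ⟨C₀ * (Cd ^ 2 * C), by positivity, C ^ 2 * Cd ^ 3 + 1, by linarith, ?_⟩
  intro x r hr u hu
  have hrn : (0:ℝ) < r ^ n := by positivity
  -- a radius with small measure
  obtain ⟨t₀, ht₀pos, ht₀⟩ := aux_exists_small hn0 ω hμ hfin x (ε := C * r ^ n) (by positivity)
  -- a radius with large measure
  obtain ⟨t₁, ht₁pos, ht₁⟩ := aux_exists_large hn0 hCd hdoub hpos hfin x (C * r ^ n)
  -- find the first dyadic crossing
  have hPex : ∃ j : ℕ, C * r ^ n ≤ (μ (ball x ((2:ℝ) ^ j * t₀))).toReal := by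
    obtain ⟨j, hj⟩ := pow_unbounded_of_one_lt (t₁ / t₀) (one_lt_two (α := ℝ))
    refine ⟨j, le_trans ht₁ ?_⟩
    have hle : t₁ ≤ 2 ^ j * t₀ := by
      rw [div_lt_iff₀ ht₀pos] at hj
      linarith
    exact ENNReal.toReal_mono (hfin x _ (by positivity)).ne
      (measure_mono (ball_subset_ball hle))
  have hjspec := Nat.find_spec hPex
  have hjne : Nat.find hPex ≠ 0 := by
    intro h0
    rw [h0] at hjspec
    norm_num at hjspec
    linarith
  obtain ⟨m, hm⟩ : ∃ m, Nat.find hPex = m + 1 := ⟨Nat.find hPex - 1, by omega⟩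
  have hmlt := Nat.find_min hPex (m := m) (by omega)
  rw [hm] at hjspec
  -- s' : last radius before crossing
  set s' : ℝ := (2:ℝ) ^ m * t₀ with hs'def
  have hs'pos : 0 < s' := by positivity
  have hkey2 : (μ (ball x s')).toReal < C * r ^ n := not_le.mp hmlt
  have hkey1 : C * r ^ n ≤ (μ (ball x (2 * s'))).toReal := by
    have h2 : (2:ℝ) ^ (m + 1) * t₀ = 2 * s' := by rw [hs'def]; ring
    rwa [h2] at hjspec
  -- doubling bounds in real form
  have hD1 : (μ (ball x (2 * s'))).toReal ≤ Cd * (μ (ball x s')).toReal :=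
    aux_doub_real hCd hdoub hfin x hs'pos
  have hD2 : (μ (ball x (2 * (2 * s')))).toReal ≤ Cd * (μ (ball x (2 * s'))).toReal :=
    aux_doub_real hCd hdoub hfin x (by positivity)
  have hD3 : (μ (ball x (2 * (2 * (2 * s'))))).toReal
      ≤ Cd * (μ (ball x (2 * (2 * s')))).toReal :=
    aux_doub_real hCd hdoub hfin x (by positivity)
  have hVB : (μ (ball x (2 * (2 * s')))).toReal ≤ Cd ^ 2 * C * r ^ n := by nlinarith
  have hV4 : (μ (ball x (2 * (2 * (2 * s'))))).toReal ≤ Cd ^ 3 * C * r ^ n := by nlinarith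
  -- distance control : points of small d-distance lie in Euclidean balls
  have hdist_le : ∀ (ρ t : ℝ), 0 < t → C * ρ ^ n ≤ (μ (ball x t)).toReal →
      ∀ y, d x y < ρ → dist x y ≤ t := by
    intro ρ t ht hVt y hy
    by_contra hgt
    push_neg at hgt
    have hmono : (μ (ball x t)).toReal ≤ (μ (ball x (dist x y))).toReal :=
      ENNReal.toReal_mono (hfin x _ (lt_trans ht hgt)).ne
        (measure_mono (ball_subset_ball hgt.le))
    have h1 := (hcomp x y).1
    have hρn : ρ ^ n ≤ d x y ^ n := by
      have h2 : C⁻¹ * (C * ρ ^ n) ≤ C⁻¹ * (μ (ball x (dist x y))).toReal :=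
        mul_le_mul_of_nonneg_left (le_trans hVt hmono) (by positivity)
      rw [← mul_assoc, inv_mul_cancel₀ (ne_of_gt hC0), one_mul] at h2
      exact le_trans h2 h1
    have hpow := pow_lt_pow_left₀ hy (hd_nonneg x y) hnne
    linarith
  -- the d-ball of radius r is inside the Euclidean ball B
  have inc1 : {y | d x y < r} ⊆ ball x (2 * (2 * s')) := by
    intro y hy
    have := hdist_le r (2 * s') (by positivity) hkey1 y hy
    rw [mem_ball, dist_comm]
    have h2 : 2 * s' < 2 * (2 * s') := by linarith
    linarith
  -- the doubled Semmes ball is inside the d-ball of radius C₂ * r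
  have inc2 : ball x (2 * (2 * (2 * s'))) ⊆ {y | d x y < (C ^ 2 * Cd ^ 3 + 1) * r} := by
    intro y hy
    rcases eq_or_ne x y with rfl | hxy
    · show d x x < (C ^ 2 * Cd ^ 3 + 1) * r
      rw [hd_self]
      positivity
    · show d x y < (C ^ 2 * Cd ^ 3 + 1) * r
      have hy' : dist x y < 2 * (2 * (2 * s')) := by
        rw [dist_comm]; exact mem_ball.mp hy
      have hmono : (μ (ball x (dist x y))).toReal
          ≤ (μ (ball x (2 * (2 * (2 * s'))))).toReal :=
        ENNReal.toReal_mono (hfin x _ (by positivity)).ne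
          (measure_mono (ball_subset_ball hy'.le))
      have h2 := (hcomp x y).2
      have hC₂1 : (1:ℝ) ≤ C ^ 2 * Cd ^ 3 + 1 := by linarith
      have hC₂pow : C ^ 2 * Cd ^ 3 + 1 ≤ (C ^ 2 * Cd ^ 3 + 1) ^ n := le_self_pow₀ hC₂1 hnne
      have hdn : d x y ^ n < ((C ^ 2 * Cd ^ 3 + 1) * r) ^ n := by
        rw [mul_pow]
        have hA : C * (μ (ball x (dist x y))).toReal ≤ C * (Cd ^ 3 * C * r ^ n) :=
          mul_le_mul_of_nonneg_left (le_trans hmono hV4) hC0.le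
        have hstep : d x y ^ n ≤ C ^ 2 * Cd ^ 3 * r ^ n := by nlinarith [h2, hA]
        have hB : C ^ 2 * Cd ^ 3 * r ^ n < (C ^ 2 * Cd ^ 3 + 1) * r ^ n :=
          mul_lt_mul_of_pos_right (by linarith) hrn
        have hC' : (C ^ 2 * Cd ^ 3 + 1) * r ^ n ≤ (C ^ 2 * Cd ^ 3 + 1) ^ n * r ^ n :=
          mul_le_mul_of_nonneg_right hC₂pow hrn.le
        linarith
      exact lt_of_pow_lt_pow_left₀ n (by positivity) hdn
  -- the big d-ball is bounded
  obtain ⟨t₂, ht₂pos, ht₂⟩ := aux_exists_large hn0 hCd hdoub hpos hfin x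
    (C * ((C ^ 2 * Cd ^ 3 + 1) * r) ^ n)
  have hbig_bd : Bornology.IsBounded {y | d x y < (C ^ 2 * Cd ^ 3 + 1) * r} := by
    refine (isBounded_closedBall (x := x) (r := t₂)).subset ?_
    intro y hy
    rw [mem_closedBall, dist_comm]
    exact hdist_le ((C ^ 2 * Cd ^ 3 + 1) * r) t₂ ht₂pos ht₂ y hy
  have hbig_meas : MeasurableSet {y | d x y < (C ^ 2 * Cd ^ 3 + 1) * r} :=
    (aux_isOpen_dball d hd_tri hd_top x _).measurableSet
  -- integrability of the gradient term on the big d-ball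
  have h_int_big : IntegrableOn (fun z => ω z ^ (-(1:ℝ)/n) * ‖fderiv ℝ u z‖)
      {y | d x y < (C ^ 2 * Cd ^ 3 + 1) * r} μ :=
    aux_integrableOn_h hn ω hω hωloc hμ u hu hbig_bd hbig_meas
  have hgrad_nonneg : ∀ z, 0 ≤ ω z ^ (-(1:ℝ)/n) * ‖fderiv ℝ u z‖ := by
    intro z
    have := (hω z).le
    positivity
  -- abbreviations
  have hμB : 0 < (μ (ball x (2 * (2 * s')))).toReal :=
    ENNReal.toReal_pos (hpos x _ (by positivity)).ne' (hfin x _ (by positivity)).ne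
  have hμBne : (μ (ball x (2 * (2 * s')))).toReal ≠ 0 := hμB.ne'
  -- integrabilities on B
  have hu_int : IntegrableOn u (ball x (2 * (2 * s'))) μ :=
    aux_integrableOn hfin hu.continuous isBounded_ball
  have habs_int : ∀ z, IntegrableOn (fun y => |u z - u y|) (ball x (2 * (2 * s'))) μ :=
    fun z => aux_integrableOn hfin ((continuous_const.sub hu.continuous).abs) isBounded_ball
  -- pointwise bound with the mean value c₀
  have hpt : ∀ z, |u z - (μ (ball x (2 * (2 * s')))).toReal⁻¹ *
        ∫ y in ball x (2 * (2 * s')), u y ∂μ|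
      ≤ (μ (ball x (2 * (2 * s')))).toReal⁻¹ *
        ∫ y in ball x (2 * (2 * s')), |u z - u y| ∂μ := by
    intro z
    have hconst_int : IntegrableOn (fun _ => u z) (ball x (2 * (2 * s'))) μ :=
      (integrableOn_const_iff).2 (Or.inr (hfin x _ (by positivity)))
    have e1 : ∫ y in ball x (2 * (2 * s')), (u z - u y) ∂μ
        = (μ (ball x (2 * (2 * s')))).toReal * u z
          - ∫ y in ball x (2 * (2 * s')), u y ∂μ := by
      rw [integral_sub hconst_int hu_int, setIntegral_const, smul_eq_mul, Measure.real]
    have e2 : |∫ y in ball x (2 * (2 * s')), (u z - u y) ∂μ|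
        ≤ ∫ y in ball x (2 * (2 * s')), |u z - u y| ∂μ := by
      simpa only [Real.norm_eq_abs] using
        norm_integral_le_integral_norm (μ := μ.restrict (ball x (2 * (2 * s'))))
          (f := fun y => u z - u y)
    have e3 : u z - (μ (ball x (2 * (2 * s')))).toReal⁻¹ *
          ∫ y in ball x (2 * (2 * s')), u y ∂μ
        = (μ (ball x (2 * (2 * s')))).toReal⁻¹ *
          ((μ (ball x (2 * (2 * s')))).toReal * u z
            - ∫ y in ball x (2 * (2 * s')), u y ∂μ) := by
      rw [mul_sub, inv_mul_cancel_left₀ hμBne]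
    rw [e3, abs_mul, abs_of_nonneg (inv_nonneg.2 hμB.le)]
    apply mul_le_mul_of_nonneg_left _ (inv_nonneg.2 hμB.le)
    rw [← e1]
    exact e2
  -- continuity of z ↦ ∫ |u z - u y|
  have hGlip : ∀ z w, |(∫ y in ball x (2 * (2 * s')), |u z - u y| ∂μ)
      - ∫ y in ball x (2 * (2 * s')), |u w - u y| ∂μ|
      ≤ (μ (ball x (2 * (2 * s')))).toReal * |u z - u w| := by
    intro z w
    have h1 : (∫ y in ball x (2 * (2 * s')), |u z - u y| ∂μ)
        - ∫ y in ball x (2 * (2 * s')), |u w - u y| ∂μ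
        = ∫ y in ball x (2 * (2 * s')), (|u z - u y| - |u w - u y|) ∂μ :=
      (integral_sub (habs_int z) (habs_int w)).symm
    rw [h1]
    have hconst_int : Integrable (fun _ => |u z - u w|)
        (μ.restrict (ball x (2 * (2 * s')))) :=
      (integrableOn_const_iff).2 (Or.inr (hfin x _ (by positivity)))
    calc |∫ y in ball x (2 * (2 * s')), (|u z - u y| - |u w - u y|) ∂μ|
        ≤ ∫ y in ball x (2 * (2 * s')), ‖|u z - u y| - |u w - u y|‖ ∂μ := by
          simpa only [Real.norm_eq_abs] using
            norm_integral_le_integral_norm (μ := μ.restrict (ball x (2 * (2 * s'))))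
              (f := fun y => |u z - u y| - |u w - u y|)
      _ ≤ ∫ _y in ball x (2 * (2 * s')), |u z - u w| ∂μ := by
          refine integral_mono ((habs_int z).sub (habs_int w)).abs hconst_int ?_
          intro y
          simp only [Real.norm_eq_abs]
          refine le_trans (abs_abs_sub_abs_le_abs_sub _ _) (le_of_eq ?_)
          rw [sub_sub_sub_cancel_right]
      _ = (μ (ball x (2 * (2 * s')))).toReal * |u z - u w| := by
          rw [setIntegral_const, smul_eq_mul, Measure.real]
  have hGcont : Continuous fun z => ∫ y in ball x (2 * (2 * s')), |u z - u y| ∂μ := by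
    rw [continuous_iff_continuousAt]
    intro z₀
    rw [Metric.continuousAt_iff]
    intro ε hε
    have huc : ContinuousAt u z₀ := hu.continuous.continuousAt
    rw [Metric.continuousAt_iff] at huc
    obtain ⟨δ, hδ, hδ'⟩ := huc (ε / ((μ (ball x (2 * (2 * s')))).toReal + 1)) (by positivity)
    refine ⟨δ, hδ, fun {z} hz => ?_⟩
    have h2 : |u z - u z₀| < ε / ((μ (ball x (2 * (2 * s')))).toReal + 1) := by
      have := hδ' hz
      rwa [Real.dist_eq] at this
    rw [Real.dist_eq]
    have h3 : (μ (ball x (2 * (2 * s')))).toReal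
        * (ε / ((μ (ball x (2 * (2 * s')))).toReal + 1)) < ε := by
      have hlt : (μ (ball x (2 * (2 * s')))).toReal
          / ((μ (ball x (2 * (2 * s')))).toReal + 1) < 1 := by
        rw [div_lt_one (by positivity)]
        linarith
      calc (μ (ball x (2 * (2 * s')))).toReal
          * (ε / ((μ (ball x (2 * (2 * s')))).toReal + 1))
          = ((μ (ball x (2 * (2 * s')))).toReal
            / ((μ (ball x (2 * (2 * s')))).toReal + 1)) * ε := by ring
        _ < 1 * ε := mul_lt_mul_of_pos_right hlt hε
        _ = ε := one_mul ε
    calc |(∫ y in ball x (2 * (2 * s')), |u z - u y| ∂μ)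
        - ∫ y in ball x (2 * (2 * s')), |u z₀ - u y| ∂μ|
        ≤ (μ (ball x (2 * (2 * s')))).toReal * |u z - u z₀| := hGlip z z₀
      _ ≤ (μ (ball x (2 * (2 * s')))).toReal
          * (ε / ((μ (ball x (2 * (2 * s')))).toReal + 1)) := by
          exact mul_le_mul_of_nonneg_left h2.le hμB.le
      _ < ε := h3
  have hg_int : IntegrableOn (fun z => (μ (ball x (2 * (2 * s')))).toReal⁻¹ *
      ∫ y in ball x (2 * (2 * s')), |u z - u y| ∂μ) (ball x (2 * (2 * s'))) μ :=
    aux_integrableOn hfin (continuous_const.mul hGcont) isBounded_ball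
  have habs_c₀_int : IntegrableOn (fun z => |u z - (μ (ball x (2 * (2 * s')))).toReal⁻¹ *
      ∫ y in ball x (2 * (2 * s')), u y ∂μ|) (ball x (2 * (2 * s'))) μ :=
    aux_integrableOn hfin ((hu.continuous.sub continuous_const).abs) isBounded_ball
  -- the Semmes inequality on B
  have hSem := hSemmes x (2 * (2 * s')) (by positivity) u hu
  -- prefactor bound
  have hpre : (μ (ball x (2 * (2 * s')))).toReal ^ ((1:ℝ)/n) ≤ Cd ^ 2 * C * r := by
    have h2 : (μ (ball x (2 * (2 * s')))).toReal ^ ((1:ℝ)/n)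
        ≤ (Cd ^ 2 * C * r ^ n) ^ ((1:ℝ)/n) :=
      Real.rpow_le_rpow ENNReal.toReal_nonneg hVB (by positivity)
    have h3 : (Cd ^ 2 * C * r ^ n) ^ ((1:ℝ)/n) = (Cd ^ 2 * C) ^ ((1:ℝ)/n) * r := by
      rw [Real.mul_rpow (by positivity) (by positivity)]
      congr 1
      rw [← Real.rpow_natCast r n, ← Real.rpow_mul hr.le]
      rw [mul_one_div, div_self (ne_of_gt hnR), Real.rpow_one]
    have h4 : (Cd ^ 2 * C) ^ ((1:ℝ)/n) ≤ Cd ^ 2 * C := by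
      have h5 : (1:ℝ)/n ≤ 1 := by
        rw [div_le_one hnR]
        exact_mod_cast (by omega : 1 ≤ n)
      have := Real.rpow_le_rpow_of_exponent_le (x := Cd ^ 2 * C) (by nlinarith) h5
      rwa [Real.rpow_one] at this
    calc (μ (ball x (2 * (2 * s')))).toReal ^ ((1:ℝ)/n)
        ≤ (Cd ^ 2 * C) ^ ((1:ℝ)/n) * r := h3 ▸ h2
      _ ≤ Cd ^ 2 * C * r := mul_le_mul_of_nonneg_right h4 hr.le
  -- gradient integral comparisons
  have hJ0 : 0 ≤ ∫ z in ball x (2 * (2 * (2 * s'))),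
      ω z ^ (-(1:ℝ)/n) * ‖fderiv ℝ u z‖ ∂μ :=
    setIntegral_nonneg measurableSet_ball fun z _ => hgrad_nonneg z
  have hJ'0 : 0 ≤ ∫ z in {y | d x y < (C ^ 2 * Cd ^ 3 + 1) * r},
      ω z ^ (-(1:ℝ)/n) * ‖fderiv ℝ u z‖ ∂μ :=
    setIntegral_nonneg hbig_meas fun z _ => hgrad_nonneg z
  have hJ : (∫ z in ball x (2 * (2 * (2 * s'))), ω z ^ (-(1:ℝ)/n) * ‖fderiv ℝ u z‖ ∂μ)
      ≤ ∫ z in {y | d x y < (C ^ 2 * Cd ^ 3 + 1) * r},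
        ω z ^ (-(1:ℝ)/n) * ‖fderiv ℝ u z‖ ∂μ :=
    setIntegral_mono_set h_int_big
      (Eventually.of_forall fun z => hgrad_nonneg z) (HasSubset.Subset.eventuallyLE inc2)
  -- bound the infimum by the choice c = c₀
  have hbdd : BddBelow (Set.range fun c : ℝ => ∫ y in {y | d x y < r}, |u y - c| ∂μ) := by
    refine ⟨0, ?_⟩
    rintro _ ⟨c, rfl⟩
    exact integral_nonneg fun y => abs_nonneg _
  calc (⨅ c : ℝ, ∫ y in {y | d x y < r}, |u y - c| ∂μ)
      ≤ ∫ y in {y | d x y < r}, |u y - (μ (ball x (2 * (2 * s')))).toReal⁻¹ *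
          ∫ w in ball x (2 * (2 * s')), u w ∂μ| ∂μ := ciInf_le hbdd _
    _ ≤ ∫ z in ball x (2 * (2 * s')), |u z - (μ (ball x (2 * (2 * s')))).toReal⁻¹ *
          ∫ w in ball x (2 * (2 * s')), u w ∂μ| ∂μ :=
        setIntegral_mono_set habs_c₀_int
          (Eventually.of_forall fun z => abs_nonneg _) (HasSubset.Subset.eventuallyLE inc1)
    _ ≤ ∫ z in ball x (2 * (2 * s')), (μ (ball x (2 * (2 * s')))).toReal⁻¹ *
          (∫ y in ball x (2 * (2 * s')), |u z - u y| ∂μ) ∂μ :=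
        setIntegral_mono_on habs_c₀_int hg_int measurableSet_ball (fun z _ => hpt z)
    _ ≤ C₀ * (μ (ball x (2 * (2 * s')))).toReal ^ ((1:ℝ)/n) *
          ∫ z in ball x (2 * (2 * (2 * s'))), ω z ^ (-(1:ℝ)/n) * ‖fderiv ℝ u z‖ ∂μ := hSem
    _ ≤ (C₀ * (Cd ^ 2 * C * r)) *
          ∫ z in ball x (2 * (2 * (2 * s'))), ω z ^ (-(1:ℝ)/n) * ‖fderiv ℝ u z‖ ∂μ := by
        exact mul_le_mul_of_nonneg_right (mul_le_mul_of_nonneg_left hpre hC₀.le) hJ0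
    _ ≤ (C₀ * (Cd ^ 2 * C * r)) *
          ∫ z in {y | d x y < (C ^ 2 * Cd ^ 3 + 1) * r},
            ω z ^ (-(1:ℝ)/n) * ‖fderiv ℝ u z‖ ∂μ :=
        mul_le_mul_of_nonneg_left hJ (by positivity)
    _ = C₀ * (Cd ^ 2 * C) * r *
          ∫ z in {y | d x y < (C ^ 2 * Cd ^ 3 + 1) * r},
            ω z ^ (-(1:ℝ)/n) * ‖fderiv ℝ u z‖ ∂μ := by ring
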